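/- For β ∈ [0,1), the limit as n → ∞ of β · ∑_{k=0}^{n-1} β^k ∑_{l=1}^{k+1} ∑_{b=0}^{n-l} β^b − β/((1-β)²(1+β)) equals 2β²/((1-β)³(1+β)). -/

import Mathlib

open Filter Finset

theorem C_neq_limit (β : ℝ) (hβ0 : 0 ≤ β) (hβ1 : β < 1) :
    Tendsto (fun n : ℕ =>
        β * ∑ k ∈ Finset.range n, β ^ k *
            ∑ l ∈ Finset.Icc 1 (k + 1), ∑ b ∈ Finset.range (n - l + 1), β ^ b
          - β / ((1 - β) ^ 2 * (1 + β)))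
      atTop (nhds (2 * β ^ 2 / ((1 - β) ^ 3 * (1 + β)))) := by
  have hβ : β ≠ 1 := hβ1.ne
  have hb1 : β - 1 ≠ 0 := sub_ne_zero.mpr hβ
  have h1b : (1 : ℝ) - β ≠ 0 := sub_ne_zero.mpr (Ne.symm hβ)
  have h1p : (1 : ℝ) + β ≠ 0 := by positivity
  have hr : ‖β‖ < 1 := by rw [Real.norm_eq_abs, abs_of_nonneg hβ0]; exact hβ1
  set A : ℕ → ℝ := fun n => ∑ k ∈ Finset.range n, ((k : ℝ) * β ^ k + β ^ k) with hA
  have key : ∀ n : ℕ,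
      β * ∑ k ∈ Finset.range n, β ^ k *
          ∑ l ∈ Finset.Icc 1 (k + 1), ∑ b ∈ Finset.range (n - l + 1), β ^ b
        = ((β * (β ^ n * β ^ n - β ^ n) / (β - 1) - (n : ℝ) * β ^ n) / (β - 1) - A n)
            * (β / (β - 1)) := by
    intro n
    have step1 : ∀ k ∈ Finset.range n,
        β ^ k * ∑ l ∈ Finset.Icc 1 (k + 1), ∑ b ∈ Finset.range (n - l + 1), β ^ b
          = (β ^ n * ((β ^ (k + 1) - 1) / (β - 1)) - ((k : ℝ) + 1) * β ^ k) / (β - 1) := by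
      intro k hk
      rw [Finset.mem_range] at hk
      have e1 : ∑ l ∈ Finset.Icc 1 (k + 1), ∑ b ∈ Finset.range (n - l + 1), β ^ b
          = ∑ i ∈ Finset.range (k + 1), ((β ^ (n - i) - 1) / (β - 1)) := by
        rw [← Finset.Ico_add_one_right_eq_Icc, Finset.sum_Ico_eq_sum_range]
        have hc : k + 1 + 1 - 1 = k + 1 := by omega
        rw [hc]
        refine Finset.sum_congr rfl fun i hi => ?_
        rw [Finset.mem_range] at hi
        have h2 : n - (1 + i) + 1 = n - i := by omega
        rw [h2, geom_sum_eq hβ]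
      rw [e1, Finset.mul_sum]
      have e2 : ∀ i ∈ Finset.range (k + 1),
          β ^ k * ((β ^ (n - i) - 1) / (β - 1)) = (β ^ n * β ^ (k - i) - β ^ k) / (β - 1) := by
        intro i hi
        rw [Finset.mem_range] at hi
        have hpow : β ^ k * β ^ (n - i) = β ^ n * β ^ (k - i) := by
          rw [← pow_add, ← pow_add]; congr 1; omega
        field_simp
        linarith [hpow]
      rw [Finset.sum_congr rfl e2, ← Finset.sum_div]
      congr 1
      rw [Finset.sum_sub_distrib, Finset.sum_const, Finset.card_range]
      have e3 : ∑ i ∈ Finset.range (k + 1), β ^ n * β ^ (k - i)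
          = β ^ n * ((β ^ (k + 1) - 1) / (β - 1)) := by
        rw [← Finset.mul_sum]
        congr 1
        rw [← geom_sum_eq hβ (k + 1), ← Finset.sum_range_reflect (fun j => β ^ j) (k + 1)]
        refine Finset.sum_congr rfl fun i hi => ?_
        rw [Finset.mem_range] at hi
        have hci : k + 1 - 1 - i = k - i := by omega
        rw [hci]
      rw [e3]
      ring
    rw [Finset.sum_congr rfl step1, ← Finset.sum_div, Finset.sum_sub_distrib, ← Finset.mul_sum]
    have e4 : ∑ k ∈ Finset.range n, ((β ^ (k + 1) - 1) / (β - 1))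
        = (β * ((β ^ n - 1) / (β - 1)) - (n : ℝ)) / (β - 1) := by
      rw [← Finset.sum_div, Finset.sum_sub_distrib, Finset.sum_const, Finset.card_range,
        nsmul_eq_mul, mul_one]
      congr 2
      rw [← geom_sum_eq hβ n, Finset.mul_sum]
      refine Finset.sum_congr rfl fun k _ => ?_
      ring
    rw [e4]
    have e5 : ∑ k ∈ Finset.range n, ((k : ℝ) + 1) * β ^ k = A n := by
      refine Finset.sum_congr rfl fun k _ => ?_
      ring
    rw [e5]
    field_simp
  have t1 : Tendsto (fun n : ℕ => β ^ n) atTop (nhds 0) :=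
    tendsto_pow_atTop_nhds_zero_of_lt_one hβ0 hβ1
  have hs1 : Summable (fun n : ℕ => (n : ℝ) * β ^ n) := by
    have := summable_pow_mul_geometric_of_norm_lt_one 1 hr
    simpa using this
  have hs2 : Summable (fun n : ℕ => β ^ n) := summable_geometric_of_lt_one hβ0 hβ1
  have t2 : Tendsto (fun n : ℕ => (n : ℝ) * β ^ n) atTop (nhds 0) :=
    hs1.tendsto_atTop_zero
  set S : ℝ := β / (1 - β) ^ 2 + (1 - β)⁻¹ with hS
  have t3 : Tendsto A atTop (nhds S) := by
    have hsum : HasSum (fun n : ℕ => (n : ℝ) * β ^ n + β ^ n) S := by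
      have := (hs1.hasSum.add hs2.hasSum)
      rwa [tsum_coe_mul_geometric_of_norm_lt_one hr, tsum_geometric_of_lt_one hβ0 hβ1] at this
    exact hsum.tendsto_sum_nat
  have tmain : Tendsto (fun n : ℕ =>
      ((β * (β ^ n * β ^ n - β ^ n) / (β - 1) - (n : ℝ) * β ^ n) / (β - 1) - A n)
        * (β / (β - 1)) - β / ((1 - β) ^ 2 * (1 + β))) atTop
      (nhds (((β * ((0 : ℝ) * 0 - 0) / (β - 1) - 0) / (β - 1) - S) * (β / (β - 1))
        - β / ((1 - β) ^ 2 * (1 + β)))) := by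
    exact (((((((t1.mul t1).sub t1).const_mul β).div_const (β - 1)).sub t2).div_const
      (β - 1)).sub t3 |>.mul_const (β / (β - 1))).sub_const _
  have hL : ((β * ((0 : ℝ) * 0 - 0) / (β - 1) - 0) / (β - 1) - S) * (β / (β - 1))
      - β / ((1 - β) ^ 2 * (1 + β)) = 2 * β ^ 2 / ((1 - β) ^ 3 * (1 + β)) := by
    rw [hS]
    field_simp
    ring
  rw [← hL]
  refine tmain.congr fun n => ?_
  rw [key n]
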